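/- Let x and y be nonzero vectors in ℝ² that are not collinear (not scalar multiples of each other), and let z be an interior point of the line segment xy (z = (1−t)x + ty with 0 < t < 1). Then f(x,z) > f(x,y), where f(u,v) := (‖u‖+‖v‖)/‖u−v‖. -/
import Mathlib


/-- let `x, y` be nonzero, non-collinear vectors in the plane and let
`z = (1 - t) x + t y` with `0 < t < 1` be an interior point of the segment `xy`. Then
`f(x, z) > f(x, y)` where `f(u, v) = (‖u‖ + ‖v‖)/‖u - v‖`. -/
theorem f_strict_mono_interior (x y : EuclideanSpace ℝ (Fin 2))
    (hx : x ≠ 0) (hy : y ≠ 0) (hncol : ∀ c : ℝ, y ≠ c • x)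
    (t : ℝ) (ht0 : 0 < t) (ht1 : t < 1)
    (z : EuclideanSpace ℝ (Fin 2)) (hz : z = (1 - t) • x + t • y) :
    (‖x‖ + ‖y‖) / ‖x - y‖ < (‖x‖ + ‖z‖) / ‖x - z‖ := by
  have ht1' : 0 < 1 - t := by linarith
  have hxy : x - y ≠ 0 := by
    intro h
    exact hncol 1 (by rw [one_smul, ← sub_eq_zero.mp h])
  have hnxy : 0 < ‖x - y‖ := norm_pos_iff.mpr hxy
  have hxz : x - z = t • (x - y) := by rw [hz]; module
  have hnxz : ‖x - z‖ = t * ‖x - y‖ := by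
    rw [hxz, norm_smul, Real.norm_eq_abs, abs_of_pos ht0]
  have hzne : z ≠ 0 := by
    intro h
    apply hncol (-(1 - t) / t)
    have h0 : (1 - t) • x + t • y = 0 := by rw [← hz, h]
    have hty : t • y = (-(1 - t)) • x := by linear_combination (norm := module) h0
    have := congrArg (fun v => t⁻¹ • v) hty
    simp only [smul_smul, inv_mul_cancel₀ ht0.ne', one_smul] at this
    rw [this]; congr 1; field_simp
  have hwne : (-((1 - t) • x)) ≠ 0 := by
    simp [smul_eq_zero, hx, ht1'.ne']
  have hray : ¬ SameRay ℝ z (-((1 - t) • x)) := by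
    intro hsr
    obtain ⟨r, s, hr, hs, hrs⟩ := hsr.exists_pos hzne hwne
    apply hncol ((-s * (1 - t) - r * (1 - t)) / (r * t))
    rw [hz] at hrs
    have hrt : r * t ≠ 0 := by positivity
    have : (r * t) • y = (-s * (1 - t) - r * (1 - t)) • x := by
      linear_combination (norm := module) hrs
    have := congrArg (fun v => (r * t)⁻¹ • v) this
    simp only [smul_smul, inv_mul_cancel₀ hrt, one_smul] at this
    rw [this]; congr 1; field_simp
  have htri : t * ‖y‖ < ‖z‖ + (1 - t) * ‖x‖ := by
    have h1 : ‖z + (-((1 - t) • x))‖ < ‖z‖ + ‖-((1 - t) • x)‖ :=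
      norm_add_lt_of_not_sameRay hray
    have h2 : z + (-((1 - t) • x)) = t • y := by rw [hz]; module
    rw [h2] at h1
    simpa [norm_smul, abs_of_pos ht0, abs_of_pos ht1'] using h1
  rw [hnxz, div_lt_div_iff₀ hnxy (by positivity)]
  nlinarith [norm_nonneg x, norm_nonneg y]
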